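/- Assume F : π → Matrix (Fin n) (Fin n) ℂ is bounded and satisfies condition (1.5): for every h ∈ π and every ε > 0 the set {g ∈ π | ‖F (h*g) − F g‖ ≥ ε} is finite. Then for every h ∈ π the operator L_h ∘ Φ_F ∘ L_h⁻¹ − Φ_F is a compact operator on H = ℓ²(π; ℂⁿ); equivalently, each conjugate T_h Φ T_h⁻¹ agrees with Φ_F modulo compact operators. -/

import Mathlib

open scoped Matrix.Norms.L2Operator
open scoped ENNReal

namespace ConjMultAux

noncomputable section

variable {π : Type*} {n : ℕ}

local notation "H" => lp (fun _ : π => EuclideanSpace ℂ (Fin n)) 2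

lemma two_pos' : (0:ℝ) < (2:ℝ≥0∞).toReal := by norm_num

/-- Pointwise domination gives an ℓ² norm bound. -/
lemma norm_le_mul_norm {f x : H} {c : ℝ} (hc : 0 ≤ c)
    (h : ∀ g : π, ‖f g‖ ≤ c * ‖x g‖) : ‖f‖ ≤ c * ‖x‖ := by
  have hp : (0:ℝ) < (2:ℝ≥0∞).toReal := two_pos'
  have hf := lp.hasSum_norm hp f
  have hx := (lp.hasSum_norm hp x).mul_left (c ^ (2:ℝ≥0∞).toReal)
  have key : ‖f‖ ^ (2:ℝ≥0∞).toReal ≤ c ^ (2:ℝ≥0∞).toReal * ‖x‖ ^ (2:ℝ≥0∞).toReal := by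
    refine hasSum_le (fun g => ?_) hf hx
    calc ‖f g‖ ^ (2:ℝ≥0∞).toReal
        ≤ (c * ‖x g‖) ^ (2:ℝ≥0∞).toReal :=
          Real.rpow_le_rpow (norm_nonneg _) (h g) hp.le
      _ = c ^ (2:ℝ≥0∞).toReal * ‖x g‖ ^ (2:ℝ≥0∞).toReal :=
          Real.mul_rpow hc (norm_nonneg _)
  rw [← Real.mul_rpow hc (norm_nonneg _)] at key
  exact (Real.rpow_le_rpow_iff (norm_nonneg _) (mul_nonneg hc (norm_nonneg _)) hp).1 key

variable [DecidableEq π]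

/-- Evaluation at a point as a continuous linear map. -/
def evalCLM (g : π) : H →L[ℂ] EuclideanSpace ℂ (Fin n) :=
  LinearMap.mkContinuous
    { toFun := fun ξ => ξ g
      map_add' := fun ξ η => by simp [lp.coeFn_add]
      map_smul' := fun c ξ => by simp [lp.coeFn_smul] }
    1 (fun ξ => by
      show ‖ξ g‖ ≤ 1 * ‖ξ‖
      simpa using lp.norm_apply_le_norm (E := fun _ : π => EuclideanSpace ℂ (Fin n))
        (by norm_num) ξ g)

@[simp] lemma evalCLM_apply (g : π) (ξ : H) : evalCLM g ξ = ξ g := rfl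

/-- `lp.single` as a continuous linear map. -/
def singleCLM (g : π) : EuclideanSpace ℂ (Fin n) →L[ℂ] H :=
  LinearMap.mkContinuous
    { toFun := fun v => lp.single 2 g v
      map_add' := fun v w => by
        refine lp.ext (funext fun j => ?_)
        by_cases hj : j = g
        · subst hj
          simp [lp.single_apply_self, lp.coeFn_add]
        · simp [lp.single_apply_ne _ _ _ hj, lp.coeFn_add]
      map_smul' := fun c v => by simpa using lp.single_smul 2 g v c }
    1 (fun v => by
      have := lp.norm_single (E := fun _ : π => EuclideanSpace ℂ (Fin n)) (p := 2)
        (by norm_num) g v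
      simpa using this.le)

@[simp] lemma singleCLM_apply (g : π) (v : EuclideanSpace ℂ (Fin n)) :
    singleCLM g v = lp.single 2 g v := rfl

/-- Multiplication by a fixed matrix then evaluation, as a CLM into a finite dim space. -/
def mulEvalCLM (A : Matrix (Fin n) (Fin n) ℂ) (g : π) : H →L[ℂ] EuclideanSpace ℂ (Fin n) :=
  LinearMap.mkContinuous
    { toFun := fun ξ => (EuclideanSpace.equiv (Fin n) ℂ).symm (A.mulVec (ξ g))
      map_add' := fun ξ η => by
        ext j
        have hc : ∀ k, (ξ + η : H) g k = ξ g k + η g k := fun k => by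
          simp [lp.coeFn_add]
        simp [Matrix.mulVec, dotProduct, hc, mul_add,
          Finset.sum_add_distrib]
      map_smul' := fun c ξ => by
        ext j
        have hc : ∀ k, (c • ξ : H) g k = c * ξ g k := fun k => by
          simp [lp.coeFn_smul]
        simp [Matrix.mulVec, dotProduct, hc, mul_left_comm,
          Finset.mul_sum] }
    ‖A‖ (fun ξ => by
      calc ‖(EuclideanSpace.equiv (Fin n) ℂ).symm (A.mulVec (ξ g))‖
          ≤ ‖A‖ * ‖ξ g‖ := A.l2_opNorm_mulVec (ξ g)
        _ ≤ ‖A‖ * ‖ξ‖ := by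
            gcongr
            exact lp.norm_apply_le_norm (by norm_num) ξ g)

@[simp] lemma mulEvalCLM_apply (A : Matrix (Fin n) (Fin n) ℂ) (g : π) (ξ : H) :
    mulEvalCLM A g ξ = (EuclideanSpace.equiv (Fin n) ℂ).symm (A.mulVec (ξ g)) := rfl

lemma isCompactOperator_finDimCod {E F : Type*} [NormedAddCommGroup E] [NormedAddCommGroup F]
    [NormedSpace ℂ E] [NormedSpace ℂ F] [ProperSpace F] (f : E →L[ℂ] F) :
    IsCompactOperator f := by
  refine ⟨Metric.closedBall 0 1, isCompact_closedBall 0 1, ?_⟩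
  have h0 : Metric.closedBall (0:F) 1 ∈ nhds (f 0) := by
    rw [map_zero]; exact Metric.closedBall_mem_nhds _ one_pos
  exact f.continuous.continuousAt.preimage_mem_nhds h0


lemma isCompactOperator_mulOp (G : π → Matrix (Fin n) (Fin n) ℂ)
    (hfin : ∀ ε : ℝ, 0 < ε → {g : π | ε ≤ ‖G g‖}.Finite)
    (T : H →L[ℂ] H)
    (hT : ∀ (ξ : H) (g : π), T ξ g = (G g).mulVec (ξ g)) :
    IsCompactOperator T := by
  have hclosed := isClosed_setOf_isCompactOperator (σ₁₂ := RingHom.id ℂ)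
    (M₁ := H) (M₂ := H)
  have hmem : T ∈ closure {f : H →L[ℂ] H | IsCompactOperator f} := by
    rw [Metric.mem_closure_iff]
    intro ε hε
    have hε2 : (0:ℝ) < ε / 2 := by linarith
    set s : Finset π := (hfin (ε / 2) hε2).toFinset with hs
    set X : H →L[ℂ] H := ∑ g ∈ s, (singleCLM g ∘L mulEvalCLM (G g) g) with hX
    have hXc : IsCompactOperator X := by
      have key : ∀ t : Finset π,
          IsCompactOperator (⇑(∑ g ∈ t, (singleCLM (n := n) g ∘L mulEvalCLM (G g) g))) := by
        intro t
        induction t using Finset.induction_on with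
        | empty => simpa using isCompactOperator_zero
        | insert a t' ha ih =>
            rw [Finset.sum_insert ha, ContinuousLinearMap.coe_add']
            refine IsCompactOperator.add ?_ ih
            rw [ContinuousLinearMap.coe_comp']
            exact (isCompactOperator_finDimCod _).continuous_comp (singleCLM a).continuous
      exact key s
    refine ⟨X, hXc, ?_⟩
    rw [dist_eq_norm]
    have hnorm : ‖T - X‖ ≤ ε / 2 := by
      refine ContinuousLinearMap.opNorm_le_bound _ hε2.le fun ξ => ?_
      refine norm_le_mul_norm hε2.le fun g => ?_
      have hXapp : X ξ g = (if g ∈ s then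
          ((EuclideanSpace.equiv (Fin n) ℂ).symm ((G g).mulVec (ξ g))) else 0) := by
        rw [hX]
        simp only [ContinuousLinearMap.sum_apply, lp.coeFn_sum, Finset.sum_apply,
          ContinuousLinearMap.comp_apply, singleCLM_apply, mulEvalCLM_apply, lp.single_apply,
          Finset.sum_dite_eq, Finset.sum_dite_eq', Finset.sum_pi_single]
      have happ : (T - X) ξ g = T ξ g - X ξ g := by
        simp [ContinuousLinearMap.sub_apply, lp.coeFn_sub]
      by_cases hg : g ∈ s
      · have : (T - X) ξ g = 0 := by
          rw [happ, hXapp, if_pos hg, sub_eq_zero]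
          exact congrArg (WithLp.toLp 2) (hT ξ g)
        rw [this]
        simp [mul_nonneg hε2.le (norm_nonneg _)]
      · have hb : ‖G g‖ < ε / 2 := by
          by_contra hcon
          exact hg (by simpa [hs] using le_of_not_gt hcon)
        have : (T - X) ξ g = (EuclideanSpace.equiv (Fin n) ℂ).symm ((G g).mulVec (ξ g)) := by
          rw [happ, hXapp, if_neg hg, sub_zero]
          exact congrArg (WithLp.toLp 2) (hT ξ g)
        rw [this]
        calc ‖(EuclideanSpace.equiv (Fin n) ℂ).symm ((G g).mulVec (ξ g))‖
            ≤ ‖G g‖ * ‖ξ g‖ := (G g).l2_opNorm_mulVec (ξ g)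
          _ ≤ ε / 2 * ‖ξ g‖ := by gcongr
    linarith
  exact hclosed.closure_subset hmem

end

end ConjMultAux

/-- If `F : π → Matrix (Fin n) (Fin n) ℂ` is bounded and satisfies condition
(1.5), then for every `h ∈ π` the conjugate `L_h ∘ Φ_F ∘ L_{h⁻¹}` of the multiplication
operator agrees with `Φ_F` modulo compact operators. -/
theorem conjugate_multiplication_operator_compact_difference
    {π : Type*} [Group π] {n : ℕ}
    (F : π → Matrix (Fin n) (Fin n) ℂ)
    (hbd : ∃ C : ℝ, ∀ g : π, ‖F g‖ ≤ C)
    (h15 : ∀ h : π, ∀ ε : ℝ, 0 < ε → {g : π | ε ≤ ‖F (h * g) - F g‖}.Finite)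
    (Φ : lp (fun _ : π => EuclideanSpace ℂ (Fin n)) 2 →L[ℂ]
         lp (fun _ : π => EuclideanSpace ℂ (Fin n)) 2)
    (hΦ : ∀ (ξ : lp (fun _ : π => EuclideanSpace ℂ (Fin n)) 2) (g : π),
      Φ ξ g = (F g).mulVec (ξ g))
    (L : π → (lp (fun _ : π => EuclideanSpace ℂ (Fin n)) 2 →L[ℂ]
              lp (fun _ : π => EuclideanSpace ℂ (Fin n)) 2))
    (hL : ∀ (h : π) (ξ : lp (fun _ : π => EuclideanSpace ℂ (Fin n)) 2) (g : π),
      L h ξ g = ξ (h⁻¹ * g)) :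
    ∀ h : π, IsCompactOperator (L h ∘L Φ ∘L L h⁻¹ - Φ) := by
  intro h
  classical
  refine ConjMultAux.isCompactOperator_mulOp (fun g => F (h⁻¹ * g) - F g)
    (fun ε hε => h15 h⁻¹ ε hε) _ (fun ξ g => ?_)
  have h1 : (L h ∘L Φ ∘L L h⁻¹) ξ g = (F (h⁻¹ * g)).mulVec (ξ g) := by
    rw [ContinuousLinearMap.comp_apply, ContinuousLinearMap.comp_apply, hL h, hΦ, hL h⁻¹,
      inv_inv, mul_inv_cancel_left]
  have h2 : (L h ∘L Φ ∘L L h⁻¹ - Φ) ξ g = (L h ∘L Φ ∘L L h⁻¹) ξ g - Φ ξ g := by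
    simp [ContinuousLinearMap.sub_apply, lp.coeFn_sub]
  rw [h2, WithLp.ofLp_sub, h1, hΦ]
  ext j
  simp [Matrix.sub_mulVec]
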